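/- (Lemma 2.1, pointwise form) Let e ∈ C^{2,1}(closure(Ω'×(0,∞))) be bounded and satisfy ∂_t e − Σ_{i,j} ∂_j(a_{ij} ∂_i e) + Σ_i b_i ∂_i e + c e = F(x,t,u₁) − F(x,t,u₂) in Ω'×(0,∞), where e = u₁ − u₂. Let g ∈ C²(ℝⁿ) and f ∈ C¹((0,∞)) be strictly positive and bounded, and set Φ = e² g f, c_i = b_i + 2 Σ_j a_{ij} (∂_j g)/g, and 𝔐 = [ Σ_{i,j} ( −a_{ij} (∂_{ij} g)/g − (∂_j a_{ij})(∂_i g)/g + 2 a_{ij} (∂_i g)(∂_j g)/g² ) + f'/f + 2(C + ‖c‖_∞) + Σ_i b_i (∂_i g)/g ] f g. Then pointwise on Ω'×(0,∞): ∂_t Φ − Σ_{i,j} ∂_j(a_{ij} ∂_i Φ) + Σ_i c_i ∂_i Φ ≤ e² 𝔐. In particular, if f'(t)/f(t) + Σ_{i,j}(−a_{ij}(∂_{ij}g)/g − (∂_j a_{ij})(∂_i g)/g + 2a_{ij}(∂_i g)(∂_j g)/g²)(x) + 2(C + ‖c‖_∞) + Σ_i b_i(x)(∂_i g)(x)/g(x)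 ≤ 0 for all (x,t) ∈ Ω'×(0,∞), then ∂_t Φ − Σ_{i,j} ∂_j(a_{ij} ∂_i Φ) + Σ_i c_i ∂_i Φ ≤ 0. -/

import Mathlib

open Real Set

/-- The partial derivative `∂_i u` of a function on `ℝⁿ`. -/
noncomputable def pd {n : ℕ} (i : Fin n) (u : (Fin n → ℝ) → ℝ) (x : Fin n → ℝ) : ℝ :=
  fderiv ℝ u x (Pi.single i 1)

section helpers
variable {n : ℕ}

lemma pd_add (i : Fin n) {u v : (Fin n → ℝ) → ℝ} {x : Fin n → ℝ}
    (hu : DifferentiableAt ℝ u x) (hv : DifferentiableAt ℝ v x) :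
    pd i (fun y => u y + v y) x = pd i u x + pd i v x := by
  simp only [pd, fderiv_fun_add hu hv, ContinuousLinearMap.add_apply]

lemma pd_mul (i : Fin n) {u v : (Fin n → ℝ) → ℝ} {x : Fin n → ℝ}
    (hu : DifferentiableAt ℝ u x) (hv : DifferentiableAt ℝ v x) :
    pd i (fun y => u y * v y) x = pd i u x * v x + u x * pd i v x := by
  simp only [pd, fderiv_fun_mul hu hv, ContinuousLinearMap.add_apply,
    ContinuousLinearMap.smul_apply, smul_eq_mul]
  ring

lemma pd_const_mul (i : Fin n) {u : (Fin n → ℝ) → ℝ} {x : Fin n → ℝ}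
    (hu : DifferentiableAt ℝ u x) (k : ℝ) :
    pd i (fun y => k * u y) x = k * pd i u x := by
  simp only [pd, fderiv_const_mul hu, ContinuousLinearMap.smul_apply, smul_eq_mul]

lemma pd_mul_const (i : Fin n) {u : (Fin n → ℝ) → ℝ} {x : Fin n → ℝ}
    (hu : DifferentiableAt ℝ u x) (k : ℝ) :
    pd i (fun y => u y * k) x = pd i u x * k := by
  simp only [pd, fderiv_mul_const hu, ContinuousLinearMap.smul_apply, smul_eq_mul]
  ring

lemma pd_sq (i : Fin n) {u : (Fin n → ℝ) → ℝ} {x : Fin n → ℝ}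
    (hu : DifferentiableAt ℝ u x) :
    pd i (fun y => u y ^ 2) x = 2 * u x * pd i u x := by
  have h : (fun y => u y ^ 2) = fun y => u y * u y := by funext y; ring
  rw [h, pd_mul i hu hu]; ring

lemma pd_sum (i : Fin n) {ι : Type*} {s : Finset ι} {A : ι → (Fin n → ℝ) → ℝ}
    {x : Fin n → ℝ} (h : ∀ k ∈ s, DifferentiableAt ℝ (A k) x) :
    pd i (fun y => ∑ k ∈ s, A k y) x = ∑ k ∈ s, pd i (A k) x := by
  simp only [pd, fderiv_fun_sum h, ContinuousLinearMap.sum_apply]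

lemma pd_contDiff {u : (Fin n → ℝ) → ℝ} (hu : ContDiff ℝ 2 u) (i : Fin n) :
    ContDiff ℝ 1 (pd i u) := by
  exact (hu.fderiv_right (m := 1) (by norm_num)).clm_apply contDiff_const

end helpers


set_option maxHeartbeats 1000000 in
theorem algebra_main {n : ℕ} (ee et gg ff fp cc DF C cnorm Mcv : ℝ)
    (aa aji eij gij : Fin n → Fin n → ℝ) (ei gi bb : Fin n → ℝ)
    (hsym : ∀ i j, aa i j = aa j i)
    (hgg : 0 < gg) (hff : 0 < ff)
    (hQ : 0 ≤ ∑ i, ∑ j, aa i j * ei i * ei j)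
    (hDF : |DF| ≤ C * |ee|) (hcc : |cc| ≤ cnorm)
    (het : et - (∑ j, ∑ i, (aji i j * ei i + aa i j * eij i j)) + (∑ i, bb i * ei i) + cc * ee = DF)
    (hMcv : Mcv = ((∑ i, ∑ j, (-(aa i j) * gij i j / gg - aji i j * gi i / gg
          + 2 * aa i j * gi i * gi j / gg ^ 2))
        + fp / ff + 2 * (C + cnorm) + ∑ i, bb i * gi i / gg) * ff * gg) :
    2 * ee * et * gg * ff + ee ^ 2 * gg * fp
      - (∑ j, ∑ i, (aji i j * ((2 * ee * ei i * gg + ee ^ 2 * gi i) * ff)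
          + aa i j * ((2 * ei j * ei i * gg + 2 * ee * eij i j * gg + 2 * ee * ei i * gi j
              + 2 * ee * ei j * gi i + ee ^ 2 * gij i j) * ff)))
      + ∑ i, (bb i + 2 * ∑ j, aa i j * gi j / gg) * ((2 * ee * ei i * gg + ee ^ 2 * gi i) * ff)
    ≤ ee ^ 2 * Mcv := by
  have hgne : gg ≠ 0 := hgg.ne'
  have hfne : ff ≠ 0 := hff.ne'
  have hswap : (∑ i, ∑ j, aa i j * ei j * gi i) = ∑ i, ∑ j, aa i j * ei i * gi j := by
    rw [Finset.sum_comm]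
    exact Finset.sum_congr rfl fun i _ => Finset.sum_congr rfl fun j _ => by rw [hsym j i]
  have het' : et = (∑ i, ∑ j, (aji i j * ei i + aa i j * eij i j))
      - (∑ i, bb i * ei i) - cc * ee + DF := by
    have hc : (∑ j, ∑ i, (aji i j * ei i + aa i j * eij i j))
        = ∑ i, ∑ j, (aji i j * ei i + aa i j * eij i j) := Finset.sum_comm
    rw [hc] at het; linarith
  have hbigcomm : (∑ j, ∑ i, (aji i j * ((2 * ee * ei i * gg + ee ^ 2 * gi i) * ff)
          + aa i j * ((2 * ei j * ei i * gg + 2 * ee * eij i j * gg + 2 * ee * ei i * gi j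
              + 2 * ee * ei j * gi i + ee ^ 2 * gij i j) * ff)))
      = ∑ i, ∑ j, (aji i j * ((2 * ee * ei i * gg + ee ^ 2 * gi i) * ff)
          + aa i j * ((2 * ei j * ei i * gg + 2 * ee * eij i j * gg + 2 * ee * ei i * gi j
              + 2 * ee * ei j * gi i + ee ^ 2 * gij i j) * ff)) := Finset.sum_comm
  have hbig : (∑ i, ∑ j, (aji i j * ((2 * ee * ei i * gg + ee ^ 2 * gi i) * ff)
          + aa i j * ((2 * ei j * ei i * gg + 2 * ee * eij i j * gg + 2 * ee * ei i * gi j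
              + 2 * ee * ei j * gi i + ee ^ 2 * gij i j) * ff)))
      = 2 * ee * gg * ff * (∑ i, ∑ j, (aji i j * ei i + aa i j * eij i j))
        + ff * ee ^ 2 * (∑ i, ∑ j, aji i j * gi i)
        + 2 * ff * gg * (∑ i, ∑ j, aa i j * ei i * ei j)
        + 4 * ee * ff * (∑ i, ∑ j, aa i j * ei i * gi j)
        + ff * ee ^ 2 * (∑ i, ∑ j, aa i j * gij i j) := by
    have expand : ∀ i j, (aji i j * ((2 * ee * ei i * gg + ee ^ 2 * gi i) * ff)
          + aa i j * ((2 * ei j * ei i * gg + 2 * ee * eij i j * gg + 2 * ee * ei i * gi j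
              + 2 * ee * ei j * gi i + ee ^ 2 * gij i j) * ff))
        = 2 * ee * gg * ff * (aji i j * ei i + aa i j * eij i j)
          + ff * ee ^ 2 * (aji i j * gi i)
          + 2 * ff * gg * (aa i j * ei i * ei j)
          + 2 * ee * ff * (aa i j * ei i * gi j)
          + 2 * ee * ff * (aa i j * ei j * gi i)
          + ff * ee ^ 2 * (aa i j * gij i j) := fun i j => by ring
    rw [show (∑ i, ∑ j, (aji i j * ((2 * ee * ei i * gg + ee ^ 2 * gi i) * ff)
          + aa i j * ((2 * ei j * ei i * gg + 2 * ee * eij i j * gg + 2 * ee * ei i * gi j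
              + 2 * ee * ei j * gi i + ee ^ 2 * gij i j) * ff)))
        = ∑ i, ∑ j, (2 * ee * gg * ff * (aji i j * ei i + aa i j * eij i j)
          + ff * ee ^ 2 * (aji i j * gi i)
          + 2 * ff * gg * (aa i j * ei i * ei j)
          + 2 * ee * ff * (aa i j * ei i * gi j)
          + 2 * ee * ff * (aa i j * ei j * gi i)
          + ff * ee ^ 2 * (aa i j * gij i j))
      from Finset.sum_congr rfl fun i _ => Finset.sum_congr rfl fun j _ => expand i j]
    simp only [Finset.sum_add_distrib, ← Finset.mul_sum]
    rw [hswap]; ring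
  have hthird : (∑ i, (bb i + 2 * ∑ j, aa i j * gi j / gg) * ((2 * ee * ei i * gg + ee ^ 2 * gi i) * ff))
      = 2 * ee * gg * ff * (∑ i, bb i * ei i) + ff * ee ^ 2 * (∑ i, bb i * gi i)
        + 4 * ee * ff * (∑ i, ∑ j, aa i j * ei i * gi j)
        + 2 * ee ^ 2 * ff * ((∑ i, ∑ j, aa i j * gi i * gi j) / gg) := by
    have expand : ∀ i, (bb i + 2 * ∑ j, aa i j * gi j / gg) * ((2 * ee * ei i * gg + ee ^ 2 * gi i) * ff)
        = (2 * ee * gg * ff * (bb i * ei i) + ff * ee ^ 2 * (bb i * gi i))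
          + ∑ j, (4 * ee * ff * (aa i j * ei i * gi j)
              + 2 * ee ^ 2 * ff * (aa i j * gi i * gi j / gg)) := by
      intro i
      rw [add_mul, Finset.mul_sum, Finset.sum_mul]
      have : ∀ j, 2 * (aa i j * gi j / gg) * ((2 * ee * ei i * gg + ee ^ 2 * gi i) * ff)
          = 4 * ee * ff * (aa i j * ei i * gi j)
            + 2 * ee ^ 2 * ff * (aa i j * gi i * gi j / gg) := by
        intro j; field_simp; ring
      rw [Finset.sum_congr rfl fun j _ => this j]; ring
    rw [Finset.sum_congr rfl fun i _ => expand i]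
    simp only [Finset.sum_add_distrib, ← Finset.mul_sum, ← Finset.sum_div]
    ring
  have hM : ((∑ i, ∑ j, (-(aa i j) * gij i j / gg - aji i j * gi i / gg
          + 2 * aa i j * gi i * gi j / gg ^ 2))
        + fp / ff + 2 * (C + cnorm) + ∑ i, bb i * gi i / gg) * ff * gg
      = -(ff * (∑ i, ∑ j, aa i j * gij i j)) - ff * (∑ i, ∑ j, aji i j * gi i)
        + 2 * ff * ((∑ i, ∑ j, aa i j * gi i * gi j) / gg)
        + fp * gg + 2 * (C + cnorm) * ff * gg + ff * (∑ i, bb i * gi i) := by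
    have e1 : (∑ i, ∑ j, (-(aa i j) * gij i j / gg - aji i j * gi i / gg
          + 2 * aa i j * gi i * gi j / gg ^ 2))
        = (-1 / gg) * (∑ i, ∑ j, aa i j * gij i j)
          + (-1 / gg) * (∑ i, ∑ j, aji i j * gi i)
          + (2 / gg ^ 2) * (∑ i, ∑ j, aa i j * gi i * gi j) := by
      rw [show (∑ i, ∑ j, (-(aa i j) * gij i j / gg - aji i j * gi i / gg
          + 2 * aa i j * gi i * gi j / gg ^ 2))
          = ∑ i, ∑ j, ((-1 / gg) * (aa i j * gij i j) + (-1 / gg) * (aji i j * gi i)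
            + (2 / gg ^ 2) * (aa i j * gi i * gi j))
        from Finset.sum_congr rfl fun i _ => Finset.sum_congr rfl fun j _ => by ring]
      simp only [Finset.sum_add_distrib, ← Finset.mul_sum]
    have e2 : (∑ i, bb i * gi i / gg) = (∑ i, bb i * gi i) / gg := by
      rw [Finset.sum_div]
    rw [e1, e2]
    field_simp
    ring
  have hb1 : ee * DF ≤ C * ee ^ 2 := by
    calc ee * DF ≤ |ee * DF| := le_abs_self _
      _ = |ee| * |DF| := abs_mul _ _
      _ ≤ |ee| * (C * |ee|) := mul_le_mul_of_nonneg_left hDF (abs_nonneg _)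
      _ = C * ee ^ 2 := by rw [← sq_abs ee]; ring
  have hb2 : -(cnorm * ee ^ 2) ≤ cc * ee ^ 2 := by
    have h0 : 0 ≤ (cc + cnorm) * ee ^ 2 :=
      mul_nonneg (by linarith [neg_abs_le cc]) (sq_nonneg ee)
    nlinarith [h0]
  have hfin : 0 ≤ 2 * ff * gg * ((C + cnorm) * ee ^ 2 + cc * ee ^ 2 - ee * DF
      + ∑ i, ∑ j, aa i j * ei i * ei j) := by
    apply mul_nonneg (by positivity)
    linarith [hQ, hb1, hb2]
  rw [het', hbigcomm, hbig, hthird, hMcv, hM]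
  linarith [hfin]

/-- docstring placeholder -/
theorem lemma21_pointwise (n : ℕ) (Ω' : Set (Fin n → ℝ))
    (hΩo : IsOpen Ω') (hΩb : Bornology.IsBounded Ω')
    (a : Fin n → Fin n → (Fin n → ℝ) → ℝ) (b : Fin n → (Fin n → ℝ) → ℝ)
    (c : (Fin n → ℝ) → ℝ)
    (ha : ∀ i j, ContDiff ℝ 2 (a i j)) (hb : ∀ i, ContDiff ℝ 2 (b i))
    (hc : ContDiff ℝ 2 c)
    (hsymm : ∀ i j x, a i j x = a j i x)
    (lam Lam : ℝ) (hlam : 0 < lam) (hlL : lam ≤ Lam)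
    (hell : ∀ x ξ : Fin n → ℝ, lam * ∑ i, ξ i ^ 2 ≤ ∑ i, ∑ j, a i j x * ξ i * ξ j)
    (haB : ∀ i j x, |a i j x| ≤ Lam)
    (cnorm : ℝ) (hcB : BddAbove (Set.range fun x => |c x|))
    (hcnorm : cnorm = ⨆ x, |c x|)
    (F : (Fin n → ℝ) → ℝ → ℝ → ℝ) (C : ℝ) (hC : 0 < C)
    (hF : ∀ x t z z', |F x t z - F x t z'| ≤ C * |z - z'|)
    (u₁ u₂ : (Fin n → ℝ) → ℝ → ℝ)
    (hu₁x : ∀ t, ContDiff ℝ 2 (fun x => u₁ x t))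
    (hu₂x : ∀ t, ContDiff ℝ 2 (fun x => u₂ x t))
    (hu₁t : ∀ x, Differentiable ℝ (u₁ x)) (hu₂t : ∀ x, Differentiable ℝ (u₂ x))
    (e : (Fin n → ℝ) → ℝ → ℝ) (he : e = fun x t => u₁ x t - u₂ x t)
    (heB : ∃ M, ∀ x t, |e x t| ≤ M)
    (heq : ∀ x ∈ Ω', ∀ t > (0:ℝ),
      deriv (e x) t
        - (∑ j, pd j (fun y => ∑ i, a i j y * pd i (fun z => e z t) y) x)
        + (∑ i, b i x * pd i (fun z => e z t) x) + c x * e x t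
      = F x t (u₁ x t) - F x t (u₂ x t))
    (g : (Fin n → ℝ) → ℝ) (hg : ContDiff ℝ 2 g)
    (hgpos : ∀ x, 0 < g x) (hgB : ∃ M, ∀ x, g x ≤ M)
    (f : ℝ → ℝ) (hf : ∀ t > (0:ℝ), DifferentiableAt ℝ f t)
    (hfpos : ∀ t > (0:ℝ), 0 < f t) (hfB : ∃ M, ∀ t > (0:ℝ), f t ≤ M)
    (Φ : (Fin n → ℝ) → ℝ → ℝ) (hΦ : Φ = fun x t => (e x t) ^ 2 * g x * f t)
    (ci : Fin n → (Fin n → ℝ) → ℝ)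
    (hci : ∀ i x, ci i x = b i x + 2 * ∑ j, a i j x * pd j g x / g x)
    (Mc : (Fin n → ℝ) → ℝ → ℝ)
    (hMc : ∀ x t, Mc x t =
      ((∑ i, ∑ j, (-(a i j x) * pd j (pd i g) x / g x
          - pd j (a i j) x * pd i g x / g x
          + 2 * a i j x * pd i g x * pd j g x / (g x) ^ 2))
        + deriv f t / f t + 2 * (C + cnorm)
        + ∑ i, b i x * pd i g x / g x) * f t * g x) :
    (∀ x ∈ Ω', ∀ t > (0:ℝ),
      deriv (Φ x) t
        - (∑ j, pd j (fun y => ∑ i, a i j y * pd i (fun z => Φ z t) y) x)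
        + ∑ i, ci i x * pd i (fun z => Φ z t) x
      ≤ (e x t) ^ 2 * Mc x t) ∧
    ((∀ x ∈ Ω', ∀ t > (0:ℝ),
        deriv f t / f t
          + (∑ i, ∑ j, (-(a i j x) * pd j (pd i g) x / g x
              - pd j (a i j) x * pd i g x / g x
              + 2 * a i j x * pd i g x * pd j g x / (g x) ^ 2))
          + 2 * (C + cnorm) + ∑ i, b i x * pd i g x / g x ≤ 0) →
      ∀ x ∈ Ω', ∀ t > (0:ℝ),
        deriv (Φ x) t
          - (∑ j, pd j (fun y => ∑ i, a i j y * pd i (fun z => Φ z t) y) x)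
          + ∑ i, ci i x * pd i (fun z => Φ z t) x ≤ 0) := by
  have part1 : ∀ x ∈ Ω', ∀ t > (0:ℝ),
      deriv (Φ x) t
        - (∑ j, pd j (fun y => ∑ i, a i j y * pd i (fun z => Φ z t) y) x)
        + ∑ i, ci i x * pd i (fun z => Φ z t) x
      ≤ (e x t) ^ 2 * Mc x t := by
    intro x hx t ht
    have hE2 : ContDiff ℝ 2 (fun z => e z t) := by
      simp only [he]; exact (hu₁x t).sub (hu₂x t)
    have dE : Differentiable ℝ (fun z => e z t) := hE2.differentiable (by norm_num)
    have dg : Differentiable ℝ g := hg.differentiable (by norm_num)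
    have da : ∀ i j, Differentiable ℝ (a i j) := fun i j => (ha i j).differentiable (by norm_num)
    have dpdE : ∀ i, Differentiable ℝ (pd i (fun z => e z t)) :=
      fun i => (pd_contDiff hE2 i).differentiable (by norm_num)
    have dpdg : ∀ i, Differentiable ℝ (pd i g) :=
      fun i => (pd_contDiff hg i).differentiable (by norm_num)
    have claim3 : ∀ (i : Fin n) (y : Fin n → ℝ), pd i (fun z => Φ z t) y
        = (2 * e y t * pd i (fun z => e z t) y * g y + e y t ^ 2 * pd i g y) * f t := by
      intro i y
      have h0 : (fun z => Φ z t) = fun z => e z t ^ 2 * g z * f t := by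
        funext z; simp only [hΦ]
      rw [h0]
      have s1 : pd i (fun z => e z t ^ 2 * g z * f t) y
          = pd i (fun z => e z t ^ 2 * g z) y * f t :=
        pd_mul_const i (((dE y).pow 2).mul (dg y)) (f t)
      have s2 : pd i (fun z => e z t ^ 2 * g z) y
          = pd i (fun z => e z t ^ 2) y * g y + e y t ^ 2 * pd i g y :=
        pd_mul i ((dE y).pow 2) (dg y)
      have s3 : pd i (fun z => e z t ^ 2) y = 2 * e y t * pd i (fun z => e z t) y :=
        pd_sq i (dE y)
      rw [s1, s2, s3]
    have dA : ∀ i : Fin n, Differentiable ℝ (fun y => 2 * e y t * pd i (fun z => e z t) y * g y) :=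
      fun i => ((dE.const_mul 2).mul (dpdE i)).mul dg
    have dB : ∀ i : Fin n, Differentiable ℝ (fun y => e y t ^ 2 * pd i g y) :=
      fun i => (dE.pow 2).mul (dpdg i)
    have dG : ∀ i : Fin n, Differentiable ℝ
        (fun y => (2 * e y t * pd i (fun z => e z t) y * g y + e y t ^ 2 * pd i g y) * f t) :=
      fun i => ((dA i).add (dB i)).mul_const (f t)
    have h2 : ∀ j : Fin n, pd j (fun y => ∑ i, a i j y * pd i (fun z => Φ z t) y) x
        = ∑ i, (pd j (a i j) x * ((2 * e x t * pd i (fun z => e z t) x * g x + e x t ^ 2 * pd i g x) * f t)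
            + a i j x * ((2 * pd j (fun z => e z t) x * pd i (fun z => e z t) x * g x
                + 2 * e x t * pd j (pd i (fun z => e z t)) x * g x
                + 2 * e x t * pd i (fun z => e z t) x * pd j g x
                + 2 * e x t * pd j (fun z => e z t) x * pd i g x
                + e x t ^ 2 * pd j (pd i g) x) * f t)) := by
      intro j
      have hfun : (fun y => ∑ i, a i j y * pd i (fun z => Φ z t) y)
          = fun y => ∑ i, a i j y *
              ((2 * e y t * pd i (fun z => e z t) y * g y + e y t ^ 2 * pd i g y) * f t) := by
        funext y; exact Finset.sum_congr rfl fun i _ => by rw [claim3 i y]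
      rw [hfun]
      have step : pd j (fun y => ∑ i, a i j y *
            ((2 * e y t * pd i (fun z => e z t) y * g y + e y t ^ 2 * pd i g y) * f t)) x
          = ∑ i, pd j (fun y => a i j y *
              ((2 * e y t * pd i (fun z => e z t) y * g y + e y t ^ 2 * pd i g y) * f t)) x :=
        pd_sum j (fun i _ => (da i j x).mul (dG i x))
      rw [step]
      refine Finset.sum_congr rfl fun i _ => ?_
      have step2 : pd j (fun y => a i j y *
            ((2 * e y t * pd i (fun z => e z t) y * g y + e y t ^ 2 * pd i g y) * f t)) x
          = pd j (a i j) x * ((2 * e x t * pd i (fun z => e z t) x * g x + e x t ^ 2 * pd i g x) * f t)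
            + a i j x * pd j (fun y =>
                (2 * e y t * pd i (fun z => e z t) y * g y + e y t ^ 2 * pd i g y) * f t) x :=
        pd_mul j (da i j x) (dG i x)
      have t1 : pd j (fun y => (2 * e y t * pd i (fun z => e z t) y * g y + e y t ^ 2 * pd i g y) * f t) x
          = pd j (fun y => 2 * e y t * pd i (fun z => e z t) y * g y + e y t ^ 2 * pd i g y) x * f t :=
        pd_mul_const j ((dA i x).add (dB i x)) (f t)
      have t2 : pd j (fun y => 2 * e y t * pd i (fun z => e z t) y * g y + e y t ^ 2 * pd i g y) x
          = pd j (fun y => 2 * e y t * pd i (fun z => e z t) y * g y) x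
            + pd j (fun y => e y t ^ 2 * pd i g y) x :=
        pd_add j (dA i x) (dB i x)
      have t3 : pd j (fun y => 2 * e y t * pd i (fun z => e z t) y * g y) x
          = pd j (fun y => 2 * e y t * pd i (fun z => e z t) y) x * g x
            + (2 * e x t * pd i (fun z => e z t) x) * pd j g x :=
        pd_mul j (((dE.const_mul 2).mul (dpdE i)) x) (dg x)
      have t4 : pd j (fun y => 2 * e y t * pd i (fun z => e z t) y) x
          = pd j (fun y => 2 * e y t) x * pd i (fun z => e z t) x
            + (2 * e x t) * pd j (pd i (fun z => e z t)) x :=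
        pd_mul j ((dE.const_mul 2) x) (dpdE i x)
      have t5 : pd j (fun y => 2 * e y t) x = 2 * pd j (fun z => e z t) x :=
        pd_const_mul j (dE x) 2
      have t6 : pd j (fun y => e y t ^ 2 * pd i g y) x
          = pd j (fun y => e y t ^ 2) x * pd i g x + e x t ^ 2 * pd j (pd i g) x :=
        pd_mul j ((dE x).pow 2) (dpdg i x)
      have t7 : pd j (fun y => e y t ^ 2) x = 2 * e x t * pd j (fun z => e z t) x :=
        pd_sq j (dE x)
      rw [step2, t1, t2, t3, t4, t5, t6, t7]; ring
    have h4 : ∀ j : Fin n, pd j (fun y => ∑ i, a i j y * pd i (fun z => e z t) y) x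
        = ∑ i, (pd j (a i j) x * pd i (fun z => e z t) x
            + a i j x * pd j (pd i (fun z => e z t)) x) := by
      intro j
      have step : pd j (fun y => ∑ i, a i j y * pd i (fun z => e z t) y) x
          = ∑ i, pd j (fun y => a i j y * pd i (fun z => e z t) y) x :=
        pd_sum j (fun i _ => (da i j x).mul (dpdE i x))
      rw [step]
      exact Finset.sum_congr rfl fun i _ => pd_mul j (da i j x) (dpdE i x)
    have hex : DifferentiableAt ℝ (e x) t := by
      have h0 : e x = fun s => u₁ x s - u₂ x s := by funext s; simp only [he]
      rw [h0]; exact ((hu₁t x).sub (hu₂t x)) t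
    have hder : deriv (Φ x) t
        = 2 * e x t * deriv (e x) t * g x * f t + e x t ^ 2 * g x * deriv f t := by
      have hPhix : Φ x = fun s => e x s ^ 2 * g x * f s := by funext s; simp only [hΦ]
      have d1 : HasDerivAt (fun s => e x s ^ 2) (2 * e x t * deriv (e x) t) t := by
        simpa using hex.hasDerivAt.fun_pow 2
      have d2 : HasDerivAt (fun s => e x s ^ 2 * g x) (2 * e x t * deriv (e x) t * g x) t :=
        d1.mul_const (g x)
      have d3 : HasDerivAt (fun s => e x s ^ 2 * g x * f s)
          (2 * e x t * deriv (e x) t * g x * f t + e x t ^ 2 * g x * deriv f t) t :=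
        d2.mul (hf t ht).hasDerivAt
      rw [hPhix, d3.deriv]
    have spec := heq x hx t ht
    rw [show (∑ j, pd j (fun y => ∑ i, a i j y * pd i (fun z => e z t) y) x)
        = ∑ j, ∑ i, (pd j (a i j) x * pd i (fun z => e z t) x
            + a i j x * pd j (pd i (fun z => e z t)) x)
      from Finset.sum_congr rfl fun j _ => h4 j] at spec
    have hQ' : 0 ≤ ∑ i, ∑ j, a i j x * pd i (fun z => e z t) x * pd j (fun z => e z t) x := by
      refine le_trans ?_ (hell x (fun i => pd i (fun z => e z t) x))
      positivity
    have heet : e x t = u₁ x t - u₂ x t := by simp only [he]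
    have hDF' : |F x t (u₁ x t) - F x t (u₂ x t)| ≤ C * |e x t| := by
      rw [heet]; exact hF x t _ _
    have hcc' : |c x| ≤ cnorm := by rw [hcnorm]; exact le_ciSup hcB x
    have hbigsum : (∑ j, pd j (fun y => ∑ i, a i j y * pd i (fun z => Φ z t) y) x)
        = ∑ j, ∑ i, (pd j (a i j) x * ((2 * e x t * pd i (fun z => e z t) x * g x + e x t ^ 2 * pd i g x) * f t)
            + a i j x * ((2 * pd j (fun z => e z t) x * pd i (fun z => e z t) x * g x
                + 2 * e x t * pd j (pd i (fun z => e z t)) x * g x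
                + 2 * e x t * pd i (fun z => e z t) x * pd j g x
                + 2 * e x t * pd j (fun z => e z t) x * pd i g x
                + e x t ^ 2 * pd j (pd i g) x) * f t)) :=
      Finset.sum_congr rfl fun j _ => h2 j
    have hthirdsum : (∑ i, ci i x * pd i (fun z => Φ z t) x)
        = ∑ i, ((b i x + 2 * ∑ j, a i j x * pd j g x / g x)
            * ((2 * e x t * pd i (fun z => e z t) x * g x + e x t ^ 2 * pd i g x) * f t)) :=
      Finset.sum_congr rfl fun i _ => by rw [hci i x, claim3 i x]
    rw [hder, hbigsum, hthirdsum]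
    exact algebra_main (e x t) (deriv (e x) t) (g x) (f t) (deriv f t) (c x)
      (F x t (u₁ x t) - F x t (u₂ x t)) C cnorm (Mc x t)
      (fun i j => a i j x) (fun i j => pd j (a i j) x)
      (fun i j => pd j (pd i (fun z => e z t)) x) (fun i j => pd j (pd i g) x)
      (fun i => pd i (fun z => e z t) x) (fun i => pd i g x) (fun i => b i x)
      (fun i j => hsymm i j x) (hgpos x) (hfpos t ht) hQ' hDF' hcc' spec (hMc x t)
  refine ⟨part1, ?_⟩
  intro H x hx t ht
  refine le_trans (part1 x hx t ht) ?_
  rw [hMc x t]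
  have hb := H x hx t ht
  have hbr : ((∑ i, ∑ j, (-(a i j x) * pd j (pd i g) x / g x
        - pd j (a i j) x * pd i g x / g x
        + 2 * a i j x * pd i g x * pd j g x / (g x) ^ 2))
      + deriv f t / f t + 2 * (C + cnorm) + ∑ i, b i x * pd i g x / g x) ≤ 0 := by linarith
  have hfg : 0 < f t * g x := mul_pos (hfpos t ht) (hgpos x)
  nlinarith [sq_nonneg (e x t), hfg, hbr, mul_nonneg (sq_nonneg (e x t)) hfg.le]
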